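/- The tensor commutation matrix 3⊗2 is given in terms of the Gell-Mann matrices λ₁,…,λ₈ and Pauli matrices σ₁,σ₂,σ₃ by: U_{3⊗2} = ((1/3)I₃ + (1/2)λ₃ + (√3/6)λ₈) ⊗ ((1/2)I₂ + (1/2)σ₃) + ((1/2)λ₁ + (i/2)λ₂) ⊗ ((1/2)σ₁ − (i/2)σ₂) + ((1/2)λ₆ + (i/2)λ₇) ⊗ ((1/2)I₂ + (1/2)σ₃) + ((1/2)λ₁ − (i/2)λ₂) ⊗ ((1/2)I₂ − (1/2)σ₃) + ((1/2)λ₆ − (i/2)λ₇) ⊗ ((1/2)σ₁ + (i/2)σ₂) + ((1/3)I₃ − (√3/3)λ₈) ⊗ ((1/2)I₂ − (1/2)σ₃). -/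

import Mathlib

open Matrix

noncomputable def pauli1 : Matrix (Fin 2) (Fin 2) ℂ := !![0, 1; 1, 0]
noncomputable def pauli2 : Matrix (Fin 2) (Fin 2) ℂ := !![0, -Complex.I; Complex.I, 0]
noncomputable def pauli3 : Matrix (Fin 2) (Fin 2) ℂ := !![1, 0; 0, -1]

noncomputable def gm1 : Matrix (Fin 3) (Fin 3) ℂ :=
  Matrix.single 0 1 1 + Matrix.single 1 0 1
noncomputable def gm2 : Matrix (Fin 3) (Fin 3) ℂ :=
  (-Complex.I) • Matrix.single 0 1 1 + Complex.I • Matrix.single 1 0 1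
noncomputable def gm3 : Matrix (Fin 3) (Fin 3) ℂ :=
  Matrix.single 0 0 1 - Matrix.single 1 1 1
noncomputable def gm6 : Matrix (Fin 3) (Fin 3) ℂ :=
  Matrix.single 1 2 1 + Matrix.single 2 1 1
noncomputable def gm7 : Matrix (Fin 3) (Fin 3) ℂ :=
  (-Complex.I) • Matrix.single 1 2 1 + Complex.I • Matrix.single 2 1 1
noncomputable def gm8 : Matrix (Fin 3) (Fin 3) ℂ :=
  ((Real.sqrt 3 : ℝ) : ℂ)⁻¹ •
    (Matrix.single 0 0 1 + Matrix.single 1 1 1 - (2 : ℂ) • Matrix.single 2 2 1)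

/-- The Kronecker product `A ⊗ B` of a 3×3 matrix with a 2×2 matrix, realized
as a 6×6 matrix with rows and columns flattened lexicographically:
`(A ⊗ B)_{(i₁,i₂),(j₁,j₂)} = A_{i₁ j₁} B_{i₂ j₂}` at row `2·i₁+i₂`,
column `2·j₁+j₂` (zero-based). -/
noncomputable def kron32 (A : Matrix (Fin 3) (Fin 3) ℂ) (B : Matrix (Fin 2) (Fin 2) ℂ) :
    Matrix (Fin 6) (Fin 6) ℂ :=
  Matrix.of fun r s =>
    A ⟨(r : ℕ) / 2, by have := r.isLt; omega⟩ ⟨(s : ℕ) / 2, by have := s.isLt; omega⟩ *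
      B ⟨(r : ℕ) % 2, by omega⟩ ⟨(s : ℕ) % 2, by omega⟩

/-- The Kronecker product `a ⊗ b ∈ ℂ⁶` of column vectors `a ∈ ℂ³`, `b ∈ ℂ²`. -/
noncomputable def vecKron32 (a : Fin 3 → ℂ) (b : Fin 2 → ℂ) : Fin 6 → ℂ :=
  fun r => a ⟨(r : ℕ) / 2, by have := r.isLt; omega⟩ * b ⟨(r : ℕ) % 2, by omega⟩

/-- The Kronecker product `a ⊗ b ∈ ℂ⁶` of column vectors `a ∈ ℂ²`, `b ∈ ℂ³`. -/
noncomputable def vecKron23 (a : Fin 2 → ℂ) (b : Fin 3 → ℂ) : Fin 6 → ℂ :=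
  fun r => a ⟨(r : ℕ) / 3, by have := r.isLt; omega⟩ * b ⟨(r : ℕ) % 3, by omega⟩

set_option maxHeartbeats 1000000 in
/-- the tensor commutation matrix `U_{3⊗2}` (the 6×6 matrix
satisfying `U(a ⊗ b) = b ⊗ a` for all `a ∈ ℂ³`, `b ∈ ℂ²`) is given in terms of
the Gell-Mann and Pauli matrices by the six-term Kronecker-product formula. -/
theorem stmt12 (U : Matrix (Fin 6) (Fin 6) ℂ)
    (hU : ∀ (a : Fin 3 → ℂ) (b : Fin 2 → ℂ), U.mulVec (vecKron32 a b) = vecKron23 b a) :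
    U = kron32 ((1 / 3 : ℂ) • 1 + (1 / 2 : ℂ) • gm3 + ((Real.sqrt 3 : ℂ) / 6) • gm8)
          ((1 / 2 : ℂ) • 1 + (1 / 2 : ℂ) • pauli3)
        + kron32 ((1 / 2 : ℂ) • gm1 + (Complex.I / 2) • gm2)
          ((1 / 2 : ℂ) • pauli1 - (Complex.I / 2) • pauli2)
        + kron32 ((1 / 2 : ℂ) • gm6 + (Complex.I / 2) • gm7)
          ((1 / 2 : ℂ) • 1 + (1 / 2 : ℂ) • pauli3)
        + kron32 ((1 / 2 : ℂ) • gm1 - (Complex.I / 2) • gm2)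
          ((1 / 2 : ℂ) • 1 - (1 / 2 : ℂ) • pauli3)
        + kron32 ((1 / 2 : ℂ) • gm6 - (Complex.I / 2) • gm7)
          ((1 / 2 : ℂ) • pauli1 + (Complex.I / 2) • pauli2)
        + kron32 ((1 / 3 : ℂ) • 1 - ((Real.sqrt 3 : ℂ) / 3) • gm8)
          ((1 / 2 : ℂ) • 1 - (1 / 2 : ℂ) • pauli3) := by
  have hs3 : ((Real.sqrt 3 : ℝ) : ℂ) * ((Real.sqrt 3 : ℝ) : ℂ) = 3 := by
    rw [← Complex.ofReal_mul, Real.mul_self_sqrt (by norm_num : (3:ℝ) ≥ 0).le]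
    norm_num
  have hsne : ((Real.sqrt 3 : ℝ) : ℂ) ≠ 0 := by
    intro h
    rw [h, mul_zero] at hs3
    norm_num at hs3
  have key : ∀ r s : Fin 6, U r s =
      vecKron23 (fun i => if ((i:ℕ) = (s:ℕ)%2) then 1 else 0)
        (fun i => if ((i:ℕ) = (s:ℕ)/2) then 1 else 0) r := by
    intro r s
    have h := congrFun (hU (fun i => if ((i:ℕ) = (s:ℕ)/2) then 1 else 0)
      (fun i => if ((i:ℕ) = (s:ℕ)%2) then 1 else 0)) r
    rw [← h]
    simp only [mulVec, dotProduct, vecKron32, Fin.sum_univ_six]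
    fin_cases s <;>
      norm_num [show ((0:Fin 6):ℕ) = 0 from rfl, show ((1:Fin 6):ℕ) = 1 from rfl,
        show ((2:Fin 6):ℕ) = 2 from rfl, show ((3:Fin 6):ℕ) = 3 from rfl,
        show ((4:Fin 6):ℕ) = 4 from rfl, show ((5:Fin 6):ℕ) = 5 from rfl] <;> rfl
  ext r s
  rw [key]
  fin_cases r <;> fin_cases s <;>
    simp only [kron32, vecKron23, pauli1, pauli2, pauli3, gm1, gm2, gm3, gm6, gm7, gm8,
      Matrix.add_apply, Matrix.smul_apply, Matrix.sub_apply, Matrix.one_apply,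
      Matrix.of_apply, smul_eq_mul] <;>
    norm_num [Matrix.single, Matrix.of_apply, Fin.ext_iff] <;>
    field_simp <;> ring_nf <;> simp only [Complex.I_sq, Complex.I_pow_four, hs3] <;> norm_num
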